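/- Uniqueness for the stationary inverse point-source problem: let Ω ⊂ ℝ³ be a bounded convex open set and c > 0. For i = 1, 2, let M_i ∈ ℕ*, distinct points s_j^{(i)} ∈ Ω, intensities a_j^{(i)} > 0, and continuous nontrivial causal signals λ^{(i)} be given, and define u_i(x,t) = Σ_{j=1}^{M_i} a_j^{(i)} λ^{(i)}(t − c⁻¹|x − s_j^{(i)}|)/(4π|x − s_j^{(i)}|). If u₁(x,t) = u₂(x,t) for all x ∈ ∂Ω and all t ∈ ℝ, then M₁ = M₂ = M and there is a permutation π of {1,…,M} such that s_j^{(1)} = s_{π(j)}^{(2)} and a_j^{(1)} λ^{(1)}(t) = a_{π(j)}^{(2)} λ^{(2)}(t) for all t ∈ ℝ and all j. -/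

import Mathlib

open Real Set Filter Topology

local notation "E" => EuclideanSpace ℝ (Fin 3)

-- frontier crossing
lemma cross_frontier {Ω s : Set E} (hΩo : IsOpen Ω) (hs : IsPreconnected s)
    (h1 : (s ∩ Ω).Nonempty) (h2 : (s \ closure Ω).Nonempty) :
    (s ∩ frontier Ω).Nonempty := by
  by_contra h
  rw [Set.not_nonempty_iff_eq_empty] at h
  have hsub : s ⊆ Ω ∪ (closure Ω)ᶜ := by
    intro x hx
    by_cases hxc : x ∈ closure Ω
    · left
      by_contra hxΩ
      have : x ∈ frontier Ω := ⟨hxc, by rwa [hΩo.interior_eq]⟩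
      exact absurd (Set.mem_inter hx this) (by rw [h]; exact notMem_empty x)
    · exact Or.inr hxc
  obtain ⟨x, hx⟩ := hs Ω (closure Ω)ᶜ hΩo isClosed_closure.isOpen_compl hsub h1
    (h2.imp fun y hy => ⟨hy.1, hy.2⟩)
  exact hx.2.2 (subset_closure hx.2.1)

-- monotonicity of ψ along segments via triangle inequality
lemma psi_mono_toward_k {pj pk z w : E} (h : dist z w + dist w pk = dist z pk) :
    dist z pj - dist z pk ≤ dist w pj - dist w pk := by
  have h1 : dist z pj ≤ dist z w + dist w pj := dist_triangle z w pj
  linarith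

lemma psi_mono_toward_j {pj pk z w : E} (h : dist z w + dist w pj = dist z pj) :
    dist w pj - dist w pk ≤ dist z pj - dist z pk := by
  have h1 : dist z pk ≤ dist z w + dist w pk := dist_triangle z w pk
  linarith

lemma psi_eq_wbtw {pj pk z w : E} (h : dist z w + dist w pk = dist z pk)
    (heq : dist z pj - dist z pk = dist w pj - dist w pk) : Wbtw ℝ z w pj := by
  rw [← dist_add_dist_eq_iff]
  have h1 : dist z pj ≤ dist z w + dist w pj := dist_triangle z w pj
  linarith


def lineThrough (pj pk : E) : Set E := {x | x - pj ∈ Submodule.span ℝ {pk - pj}}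

lemma isClosed_lineThrough (pj pk : E) : IsClosed (lineThrough pj pk) := by
  have : lineThrough pj pk = (fun x => x - pj) ⁻¹' (Submodule.span ℝ {pk - pj} : Set E) := rfl
  rw [this]
  exact (Submodule.span ℝ {pk - pj}).closed_of_finiteDimensional.preimage
    (continuous_id.sub continuous_const)

lemma pj_mem_lineThrough (pj pk : E) : pj ∈ lineThrough pj pk := by
  simp [lineThrough]

lemma pk_mem_lineThrough (pj pk : E) : pk ∈ lineThrough pj pk := by
  simp only [lineThrough, Set.mem_setOf_eq]
  exact Submodule.mem_span_singleton_self _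

lemma wbtw_pair_mem_line {z w pj pk : E} (h1 : Wbtw ℝ z w pj) (h2 : Wbtw ℝ z w pk)
    (hzw : z ≠ w) (hjk : pj ≠ pk) : z ∈ lineThrough pj pk := by
  rw [← mem_segment_iff_wbtw] at h1 h2
  obtain ⟨a1, b1, ha1, hb1, hab1, h1⟩ := h1
  obtain ⟨a2, b2, ha2, hb2, hab2, h2⟩ := h2
  have e1 : w - z = b1 • (pj - z) := by
    have : a1 = 1 - b1 := by linarith
    rw [← h1, this]; module
  have e2 : w - z = b2 • (pk - z) := by
    have : a2 = 1 - b2 := by linarith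
    rw [← h2, this]; module
  have hb1ne : b1 ≠ 0 := by
    rintro rfl; apply hzw; rw [zero_smul] at e1; rw [sub_eq_zero] at e1; exact e1.symm
  have hb2ne : b2 ≠ 0 := by
    rintro rfl; apply hzw; rw [zero_smul] at e2; rw [sub_eq_zero] at e2; exact e2.symm
  set lam := b2 / b1 with hlam
  have key : pj - z = lam • (pk - z) := by
    have : b1 • (pj - z) = b2 • (pk - z) := by rw [← e1, ← e2]
    have := congrArg (fun v => b1⁻¹ • v) this
    simpa [smul_smul, inv_mul_cancel₀ hb1ne, hlam, div_eq_inv_mul] using this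
  have hlam1 : lam ≠ 1 := by
    rintro h
    rw [h, one_smul] at key
    exact hjk (by have := congrArg (fun v => v + z) key; simpa [sub_add_cancel] using this)
  have h1l : (1 : ℝ) - lam ≠ 0 := sub_ne_zero.mpr (Ne.symm hlam1)
  have key2 : (1 - lam) • (pj - z) = lam • (pk - pj) := by
    rw [show lam • (pk - pj) = lam • (pk - z) - lam • (pj - z) by module, ← key]
    module
  have key3 := congrArg (fun v => (1 - lam)⁻¹ • v) key2
  simp only [smul_smul, inv_mul_cancel₀ h1l, one_smul] at key3
  rw [lineThrough, Set.mem_setOf_eq, Submodule.mem_span_singleton]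
  refine ⟨-(lam / (1 - lam)), ?_⟩
  rw [div_eq_inv_mul, neg_smul, ← smul_smul, smul_smul, ← key3, neg_sub]


lemma frontier_disj {Ω : Set E} (hΩo : IsOpen Ω) {x : E} (hx : x ∈ frontier Ω) : x ∉ Ω := by
  rw [hΩo.frontier_eq] at hx; exact hx.2

lemma crossing_tendsto {Ω : Set E} (hΩo : IsOpen Ω) (hΩc : Convex ℝ Ω)
    {x₀ : E} (hx₀ : x₀ ∈ frontier Ω) {pj : E} (hpj : pj ∈ Ω)
    {z w : ℕ → E} (hz : Tendsto z atTop (nhds x₀))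
    (hw : ∀ n, w n ∈ segment ℝ (z n) pj ∧ w n ∈ frontier Ω) :
    Tendsto w atTop (nhds x₀) := by
  have hu : ∀ n, ∃ u, u ∈ Icc (0:ℝ) 1 ∧ w n = (1 - u) • z n + u • pj := by
    intro n
    obtain ⟨a, b, ha, hb, hab, h⟩ := (hw n).1
    exact ⟨b, ⟨hb, by linarith⟩, by rw [← h, show a = 1 - b by linarith]⟩
  choose u hu1 hu2 using hu
  by_contra hcon
  rw [Metric.tendsto_atTop] at hcon
  push_neg at hcon
  obtain ⟨ε, hε, hfr⟩ := hcon
  obtain ⟨φ, hφmono, hφ⟩ := Filter.extraction_of_frequently_atTop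
    (Filter.frequently_atTop.mpr (by intro N; obtain ⟨n, hn1, hn2⟩ := hfr N; exact ⟨n, hn1, hn2⟩))
  obtain ⟨uL, huL, ψ, hψmono, hψtend⟩ := isCompact_Icc.tendsto_subseq (fun m => hu1 (φ m))
  have hztend : Tendsto (fun m => z (φ (ψ m))) atTop (nhds x₀) :=
    hz.comp ((hφmono.comp hψmono).tendsto_atTop)
  have hwtend : Tendsto (fun m => w (φ (ψ m))) atTop (nhds ((1 - uL) • x₀ + uL • pj)) := by
    have : (fun m => w (φ (ψ m))) =
        fun m => (1 - u (φ (ψ m))) • z (φ (ψ m)) + u (φ (ψ m)) • pj := by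
      funext m; exact hu2 _
    rw [this]
    exact ((tendsto_const_nhds.sub hψtend).smul hztend).add (hψtend.smul_const pj)
  set wL := (1 - uL) • x₀ + uL • pj with hwL
  have hwf : wL ∈ frontier Ω :=
    isClosed_frontier.mem_of_tendsto hwtend (Filter.Eventually.of_forall fun m => (hw _).2)
  have hdist : ε ≤ dist wL x₀ := by
    have : Tendsto (fun m => dist (w (φ (ψ m))) x₀) atTop (nhds (dist wL x₀)) :=
      (continuous_id.dist continuous_const).continuousAt.tendsto.comp hwtend
    exact ge_of_tendsto this (Filter.Eventually.of_forall fun m => hφ (ψ m))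
  have hne : wL ≠ x₀ := by
    intro h; rw [h, dist_self] at hdist; linarith
  rcases eq_or_lt_of_le huL.1 with h0 | h0
  · exact hne (by rw [hwL, ← h0]; simp)
  rcases eq_or_lt_of_le huL.2 with h1 | h1
  · apply frontier_disj hΩo hwf
    rw [hwL, h1]; simpa using hpj
  have : wL ∈ openSegment ℝ x₀ pj := ⟨1 - uL, uL, by linarith, h0, by ring, rfl⟩
  have hmem := hΩc.openSegment_closure_interior_subset_interior hx₀.1
    (by rw [hΩo.interior_eq]; exact hpj) this
  rw [hΩo.interior_eq] at hmem
  exact frontier_disj hΩo hwf hmem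


lemma exists_not_mem_of_small {W : Submodule ℝ E} (h : Module.finrank ℝ W < 3) :
    ∃ v, v ∉ W := by
  by_contra hc
  push_neg at hc
  have : W = ⊤ := by
    apply Submodule.eq_top_iff'.mpr hc
  rw [this, finrank_top] at h
  rw [finrank_euclideanSpace_fin] at h
  omega

lemma finrank_span_pair_lt (a b : E) : Module.finrank ℝ (Submodule.span ℝ {a, b}) < 3 := by
  classical
  have h1 : Module.finrank ℝ (Submodule.span ℝ ({a, b} : Set E)) ≤ 2 := by
    have := finrank_span_le_card (R := ℝ) ({a, b} : Set E)
    refine le_trans this ?_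
    have : ({a, b} : Set E).toFinset ⊆ {a, b} := by
      intro x hx; simp at hx ⊢; tauto
    calc ({a, b} : Set E).toFinset.card ≤ ({a, b} : Finset E).card := Finset.card_le_card this
      _ ≤ 2 := Finset.card_insert_le a {b} |>.trans (by simp)
  omega

lemma exists_perp (e₁ d : E) (he : e₁ ≠ 0) :
    ∃ e₂ : E, (inner ℝ e₁ e₂ : ℝ) = 0 ∧ ‖e₂‖ = ‖e₁‖ ∧ e₂ ∉ Submodule.span ℝ {e₁, d} := by
  have hK : ∃ v, v ∈ (Submodule.span ℝ {e₁})ᗮ ∧ v ∉ Submodule.span ℝ {e₁, d} := by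
    by_contra hc
    push_neg at hc
    have htop : Submodule.span ℝ {e₁, d} = ⊤ := by
      rw [eq_top_iff, ← Submodule.sup_orthogonal_of_hasOrthogonalProjection
        (K := Submodule.span ℝ ({e₁} : Set E))]
      apply sup_le
      · exact Submodule.span_mono (by simp)
      · intro v hv; exact hc v hv
    have := finrank_span_pair_lt e₁ d
    rw [htop, finrank_top, finrank_euclideanSpace_fin] at this
    omega
  obtain ⟨v, hv1, hv2⟩ := hK
  have hvne : v ≠ 0 := by rintro rfl; exact hv2 (Submodule.zero_mem _)
  refine ⟨(‖e₁‖ / ‖v‖) • v, ?_, ?_, ?_⟩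
  · rw [real_inner_smul_right]
    have : (inner ℝ e₁ v : ℝ) = 0 := hv1 e₁ (Submodule.mem_span_singleton_self e₁)
    rw [this, mul_zero]
  · rw [norm_smul]
    have h1 : ‖v‖ ≠ 0 := norm_ne_zero_iff.mpr hvne
    rw [Real.norm_eq_abs, abs_div, abs_of_nonneg (norm_nonneg _), abs_of_nonneg (norm_nonneg _)]
    field_simp
  · intro hmem
    apply hv2
    have hne : ‖e₁‖ / ‖v‖ ≠ 0 := by
      apply div_ne_zero (norm_ne_zero_iff.mpr he) (norm_ne_zero_iff.mpr hvne)
    have := Submodule.smul_mem _ (‖e₁‖ / ‖v‖)⁻¹ hmem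
    rwa [smul_smul, inv_mul_cancel₀ hne, one_smul] at this


lemma no_patch_line {Ω : Set E} (hΩo : IsOpen Ω) (hΩc : Convex ℝ Ω)
    {pj pk : E} (hj : pj ∈ Ω) (hjk : pj ≠ pk)
    {x₀ : E} (hx₀ : x₀ ∈ frontier Ω) {ε : ℝ} (hε : 0 < ε)
    (hpatch : ∀ y ∈ frontier Ω, dist y x₀ < ε → y ∈ lineThrough pj pk) : False := by
  classical
  set d : E := pk - pj with hd
  have hdne : d ≠ 0 := sub_ne_zero.mpr (Ne.symm hjk)
  -- a point q ∈ Ω \ lineThrough pj pk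
  obtain ⟨ρ, hρ, hball⟩ := Metric.isOpen_iff.mp hΩo pj hj
  have hspan1 : Module.finrank ℝ (Submodule.span ℝ ({d} : Set E)) < 3 := by
    have := finrank_span_singleton (K := ℝ) hdne
    omega
  obtain ⟨v0, hv0⟩ := exists_not_mem_of_small hspan1
  have hv0ne : v0 ≠ 0 := by rintro rfl; exact hv0 (Submodule.zero_mem _)
  set q : E := pj + (ρ / (2 * ‖v0‖)) • v0 with hq
  have hqΩ : q ∈ Ω := by
    apply hball
    rw [Metric.mem_ball, dist_eq_norm, hq]
    have hv0pos : 0 < ‖v0‖ := norm_pos_iff.mpr hv0ne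
    have : ‖pj + (ρ / (2 * ‖v0‖)) • v0 - pj‖ = ρ / 2 := by
      rw [add_sub_cancel_left, norm_smul, Real.norm_eq_abs,
        abs_of_pos (by positivity), div_mul_eq_mul_div, mul_comm, mul_div_assoc]
      field_simp
    rw [this]; linarith
  have hqL : q ∉ lineThrough pj pk := by
    intro hmem
    apply hv0
    rw [lineThrough, Set.mem_setOf_eq, hq, add_sub_cancel_left] at hmem
    have hcoef : ρ / (2 * ‖v0‖) ≠ 0 := by
      have hv0pos : 0 < ‖v0‖ := norm_pos_iff.mpr hv0ne
      positivity
    have := Submodule.smul_mem _ (ρ / (2 * ‖v0‖))⁻¹ hmem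
    rwa [smul_smul, inv_mul_cancel₀ hcoef, one_smul] at this
  set e₁ : E := q - x₀ with he₁
  have he₁ne : e₁ ≠ 0 := sub_ne_zero.mpr (fun h => frontier_disj hΩo hx₀ (h ▸ hqΩ))
  have he₁pos : 0 < ‖e₁‖ := norm_pos_iff.mpr he₁ne
  obtain ⟨e₂, he₂perp, he₂norm, he₂span⟩ := exists_perp e₁ d he₁ne
  -- choose a good δ bound
  have hδ : ∃ δ > 0, δ ≤ ε ∧ ∀ y ∈ frontier Ω, dist y x₀ < δ → y ∈ lineThrough pj pk ∧
      (x₀ ∉ lineThrough pj pk → y = x₀) := by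
    by_cases hx₀L : x₀ ∈ lineThrough pj pk
    · exact ⟨ε, hε, le_refl _, fun y hy hd' => ⟨hpatch y hy hd', fun h => absurd hx₀L h⟩⟩
    · have hopen : IsOpen (lineThrough pj pk)ᶜ := (isClosed_lineThrough pj pk).isOpen_compl
      obtain ⟨δ₀, hδ₀, hball₀⟩ := Metric.isOpen_iff.mp hopen x₀ hx₀L
      refine ⟨min ε δ₀, lt_min hε hδ₀, min_le_left _ _, fun y hy hd' => ?_⟩
      have hyL := hpatch y hy (lt_of_lt_of_le hd' (min_le_left _ _))
      refine ⟨hyL, fun _ => ?_⟩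
      by_contra hne
      exact hball₀ (Metric.mem_ball.mpr (lt_of_lt_of_le hd' (min_le_right _ _))) hyL
  obtain ⟨δ, hδpos, hδε, hδprop⟩ := hδ
  -- choose t
  set t : ℝ := min (1/2) (δ / (2 * ‖e₁‖)) with ht
  have htpos : 0 < t := lt_min (by norm_num) (by positivity)
  have htlt1 : t < 1 := lt_of_le_of_lt (min_le_left _ _) (by norm_num)
  have htsmall : t * ‖e₁‖ < δ := by
    have : t ≤ δ / (2 * ‖e₁‖) := min_le_right _ _
    calc t * ‖e₁‖ ≤ (δ / (2 * ‖e₁‖)) * ‖e₁‖ := by nlinarith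
      _ = δ / 2 := by field_simp
      _ < δ := by linarith
  -- the semicircle
  set γ : ℝ → E := fun θ => x₀ + (t * Real.cos θ) • e₁ + (t * Real.sin θ) • e₂ with hγ
  have hγcont : Continuous γ := by
    apply Continuous.add
    apply Continuous.add continuous_const
    · exact ((continuous_const.mul Real.continuous_cos).smul continuous_const)
    · exact ((continuous_const.mul Real.continuous_sin).smul continuous_const)
  set C : Set E := γ '' (Icc 0 π) with hC
  have hCconn : IsPreconnected C := (isPreconnected_Icc).image γ hγcont.continuousOn
  have hγ0 : γ 0 ∈ Ω := by
    have h1 : γ 0 = (1 - t) • x₀ + t • q := by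
      rw [hγ]; simp only [Real.cos_zero, Real.sin_zero, mul_one, mul_zero, zero_smul, add_zero]
      rw [he₁]; module
    have h2 : γ 0 ∈ openSegment ℝ x₀ q := ⟨1 - t, t, by linarith, htpos, by ring, h1.symm⟩
    have := hΩc.openSegment_closure_interior_subset_interior hx₀.1
      (by rw [hΩo.interior_eq]; exact hqΩ) h2
    rwa [hΩo.interior_eq] at this
  have hγπ : γ π ∉ closure Ω := by
    intro hmem
    have h1 : γ π = x₀ - t • e₁ := by
      rw [hγ]; simp only [Real.cos_pi, Real.sin_pi, mul_zero, zero_smul, add_zero]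
      module
    have h2 : x₀ ∈ openSegment ℝ (γ π) q := by
      refine ⟨1 / (1 + t), t / (1 + t), by positivity, by positivity, ?_, ?_⟩
      · field_simp
      · rw [h1, he₁]
        have h1t : (1 : ℝ) + t ≠ 0 := by positivity
        rw [show x₀ - t • (q - x₀) = (1 + t) • x₀ - t • q by module]
        rw [smul_sub, smul_smul, smul_smul]
        rw [show 1 / (1 + t) * (1 + t) = 1 by field_simp]
        rw [show t / (1 + t) = 1 / (1+t) * t by ring]
        module
    have := hΩc.openSegment_closure_interior_subset_interior hmem
      (by rw [hΩo.interior_eq]; exact hqΩ) h2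
    rw [hΩo.interior_eq] at this
    exact frontier_disj hΩo hx₀ this
  obtain ⟨w, hwC, hwf⟩ := cross_frontier hΩo hCconn
    ⟨γ 0, ⟨0, ⟨le_refl _, Real.pi_pos.le⟩, rfl⟩, hγ0⟩
    ⟨γ π, ⟨π, ⟨Real.pi_pos.le, le_refl _⟩, rfl⟩, hγπ⟩
  obtain ⟨θ, hθ, hwθ⟩ := hwC
  -- distance from x₀
  have hwdist : dist w x₀ = t * ‖e₁‖ := by
    rw [← hwθ, hγ, dist_eq_norm]
    have : x₀ + (t * Real.cos θ) • e₁ + (t * Real.sin θ) • e₂ - x₀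
        = (t * Real.cos θ) • e₁ + (t * Real.sin θ) • e₂ := by module
    rw [this]
    have hsq : ‖(t * Real.cos θ) • e₁ + (t * Real.sin θ) • e₂‖ ^ 2 = (t * ‖e₁‖) ^ 2 := by
      rw [norm_add_sq_real]
      rw [real_inner_smul_left, real_inner_smul_right, he₂perp]
      rw [norm_smul, norm_smul]
      simp only [Real.norm_eq_abs, mul_zero]
      rw [he₂norm, mul_pow, mul_pow, sq_abs, sq_abs]
      have hc := Real.sin_sq_add_cos_sq θ
      linear_combination (t^2 * ‖e₁‖^2) * hc
    have h1 : (0:ℝ) ≤ ‖(t * Real.cos θ) • e₁ + (t * Real.sin θ) • e₂‖ := norm_nonneg _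
    have h2 : (0:ℝ) ≤ t * ‖e₁‖ := by positivity
    have h3 := congrArg Real.sqrt hsq
    rwa [Real.sqrt_sq h1, Real.sqrt_sq h2] at h3
  have hwδ : dist w x₀ < δ := by rw [hwdist]; exact htsmall
  have hwL : w ∈ lineThrough pj pk := (hδprop w hwf hwδ).1
  by_cases hx₀L : x₀ ∈ lineThrough pj pk
  · have hwL' : w - pj ∈ Submodule.span ℝ ({d} : Set E) := hwL
    have hx₀L' : x₀ - pj ∈ Submodule.span ℝ ({d} : Set E) := hx₀L
    have hwx : w - x₀ ∈ Submodule.span ℝ ({d} : Set E) := by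
      have h3 := Submodule.sub_mem _ hwL' hx₀L'
      rwa [show w - pj - (x₀ - pj) = w - x₀ by module] at h3
    obtain ⟨s, hs⟩ := Submodule.mem_span_singleton.mp hwx
    have hwx0 : w - x₀ = (t * Real.cos θ) • e₁ + (t * Real.sin θ) • e₂ := by
      rw [← hwθ, hγ]; module
    by_cases hsin : Real.sin θ = 0
    · have hcos : Real.cos θ ≠ 0 := by
        intro h
        have := Real.sin_sq_add_cos_sq θ
        rw [hsin, h] at this; norm_num at this
      have htc : t * Real.cos θ ≠ 0 := mul_ne_zero (ne_of_gt htpos) hcos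
      have he₁d : e₁ = ((t * Real.cos θ)⁻¹ * s) • d := by
        have : s • d = (t * Real.cos θ) • e₁ := by
          rw [hs, hwx0, hsin, mul_zero, zero_smul, add_zero]
        rw [← smul_smul, this, smul_smul, inv_mul_cancel₀ htc, one_smul]
      apply hqL
      rw [lineThrough, Set.mem_setOf_eq]
      have : q - pj = (x₀ - pj) + e₁ := by rw [he₁]; module
      rw [this]
      refine Submodule.add_mem _ hx₀L' ?_
      rw [he₁d]
      exact Submodule.smul_mem _ _ (Submodule.mem_span_singleton_self d)
    · apply he₂span
      have hts : t * Real.sin θ ≠ 0 := mul_ne_zero (ne_of_gt htpos) hsin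
      have he₂eq : e₂ = (t * Real.sin θ)⁻¹ • (s • d - (t * Real.cos θ) • e₁) := by
        have : (t * Real.sin θ) • e₂ = s • d - (t * Real.cos θ) • e₁ := by
          rw [hs, hwx0]; module
        rw [← this, smul_smul, inv_mul_cancel₀ hts, one_smul]
      rw [he₂eq]
      apply Submodule.smul_mem
      apply Submodule.sub_mem
      · exact Submodule.smul_mem _ _ (Submodule.subset_span (by simp))
      · exact Submodule.smul_mem _ _ (Submodule.subset_span (by simp))
  · have hwx₀ := (hδprop w hwf hwδ).2 hx₀L
    rw [hwx₀, dist_self] at hwdist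
    nlinarith


lemma no_patch_tie {Ω : Set E} (hΩo : IsOpen Ω) (hΩc : Convex ℝ Ω)
    {pj pk : E} (hj : pj ∈ Ω) (hk : pk ∈ Ω) (hjk : pj ≠ pk)
    {H : ℝ} {x₀ : E} (hx₀ : x₀ ∈ frontier Ω) {ε : ℝ} (hε : 0 < ε)
    (hpatch : ∀ y ∈ frontier Ω, dist y x₀ < ε → dist y pj - dist y pk = H) : False := by
  classical
  by_cases hcase : ∃ x₁, x₁ ∈ frontier Ω ∧ dist x₁ x₀ < ε ∧ x₁ ∉ lineThrough pj pk
  swap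
  · push_neg at hcase
    exact no_patch_line hΩo hΩc hj hjk hx₀ hε fun y hy hd => hcase y hy hd
  obtain ⟨x₁, hx₁f, hx₁d, hx₁L⟩ := hcase
  set ε₁ : ℝ := ε - dist x₁ x₀ with hε₁def
  have hε₁ : 0 < ε₁ := by simp only [hε₁def]; linarith
  have hpatch₁ : ∀ y ∈ frontier Ω, dist y x₁ < ε₁ → dist y pj - dist y pk = H := by
    intro y hy hd
    apply hpatch y hy
    calc dist y x₀ ≤ dist y x₁ + dist x₁ x₀ := dist_triangle _ _ _
      _ < ε₁ + dist x₁ x₀ := by linarith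
      _ = ε := by simp [hε₁def]
  have hψx₁ : dist x₁ pj - dist x₁ pk = H := hpatch x₁ hx₁f hx₁d
  set z : ℕ → E := fun n => x₁ + (1 / (n + 1) : ℝ) • (x₁ - pk) with hz
  have htn : ∀ n : ℕ, (0:ℝ) < 1 / (n + 1) := by
    intro n; positivity
  have hzc : Tendsto z atTop (𝓝 x₁) := by
    have h0 : Tendsto (fun n : ℕ => (1 / (n + 1 : ℝ))) atTop (𝓝 0) :=
      tendsto_one_div_add_atTop_nhds_zero_nat
    have h1 := (h0.smul_const (x₁ - pk)).const_add x₁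
    rw [zero_smul, add_zero] at h1
    exact h1
  have hseg : ∀ n, x₁ ∈ openSegment ℝ (z n) pk := by
    intro n
    set t : ℝ := 1 / (n + 1) with htdef
    have htp : 0 < t := htn n
    have h1t : (1:ℝ) + t ≠ 0 := by positivity
    refine ⟨1 / (1 + t), t / (1 + t), by positivity, by positivity, by field_simp, ?_⟩
    show (1 / (1 + t)) • (x₁ + t • (x₁ - pk)) + (t / (1 + t)) • pk = x₁
    match_scalars <;> (field_simp; try ring)
  have hzn : ∀ n, z n ∉ closure Ω := by
    intro n hmem
    have := hΩc.openSegment_closure_interior_subset_interior hmem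
      (by rw [hΩo.interior_eq]; exact hk) (hseg n)
    rw [hΩo.interior_eq] at this
    exact frontier_disj hΩo hx₁f this
  have hzx₁ : ∀ n, z n ≠ x₁ := fun n h => hzn n (h ▸ hx₁f.1)
  have hwbtwk : ∀ n, Wbtw ℝ (z n) x₁ pk := by
    intro n
    rw [← mem_segment_iff_wbtw]
    exact openSegment_subset_segment _ _ _ (hseg n)
  have hψz : ∀ n, dist (z n) pj - dist (z n) pk < H := by
    intro n
    have hdd : dist (z n) x₁ + dist x₁ pk = dist (z n) pk := (hwbtwk n).dist_add_dist
    have hle : dist (z n) pj - dist (z n) pk ≤ H := by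
      have := psi_mono_toward_k (pj := pj) hdd
      linarith [hψx₁]
    rcases lt_or_eq_of_le hle with h | h
    · exact h
    exfalso
    have heq : dist (z n) pj - dist (z n) pk = dist x₁ pj - dist x₁ pk := by
      rw [h, hψx₁]
    have hwj : Wbtw ℝ (z n) x₁ pj := psi_eq_wbtw hdd heq
    have hzL : z n ∈ lineThrough pj pk := wbtw_pair_mem_line hwj (hwbtwk n) (hzx₁ n) hjk
    apply hx₁L
    -- x₁ is an affine combination of z n and pk, both in the line
    set t : ℝ := 1 / (n + 1) with htdef
    have htp : 0 < t := htn n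
    have h1t : (1:ℝ) + t ≠ 0 := by positivity
    have hx₁eq : x₁ - pj = (1 / (1 + t)) • (z n - pj) + (t / (1 + t)) • (pk - pj) := by
      show x₁ - pj = (1 / (1 + t)) • ((x₁ + t • (x₁ - pk)) - pj) + (t / (1 + t)) • (pk - pj)
      match_scalars <;> (field_simp; try ring)
    show x₁ - pj ∈ Submodule.span ℝ {pk - pj}
    rw [hx₁eq]
    exact Submodule.add_mem _ (Submodule.smul_mem _ _ hzL)
      (Submodule.smul_mem _ _ (Submodule.mem_span_singleton_self _))
  have hwex : ∀ n, ∃ w, w ∈ segment ℝ (z n) pj ∧ w ∈ frontier Ω := by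
    intro n
    obtain ⟨w, hw1, hw2⟩ := cross_frontier hΩo (convex_segment (z n) pj).isPreconnected
      ⟨pj, right_mem_segment _ _ _, hj⟩
      ⟨z n, left_mem_segment _ _ _, hzn n⟩
    exact ⟨w, hw1, hw2⟩
  choose w hw using hwex
  have htend : Tendsto w atTop (𝓝 x₁) := crossing_tendsto hΩo hΩc hx₁f hj hzc hw
  obtain ⟨N, hN⟩ := (Metric.tendsto_atTop.mp htend) ε₁ hε₁
  have hwN := hN N (le_refl N)
  have hψw : dist (w N) pj - dist (w N) pk ≤ dist (z N) pj - dist (z N) pk := by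
    apply psi_mono_toward_j
    exact (mem_segment_iff_wbtw.mp (hw N).1).dist_add_dist
  have := hpatch₁ (w N) (hw N).2 hwN
  linarith [hψz N]


lemma core {Ω : Set E} (hΩo : IsOpen Ω) (hΩc : Convex ℝ Ω) (hΩb : Bornology.IsBounded Ω)
    {c : ℝ} (hc : 0 < c) {n : ℕ} (p : Fin n → E) (hpi : Function.Injective p)
    (hpΩ : ∀ k, p k ∈ Ω) (g : Fin n → ℝ → ℝ)
    (hg0 : ∀ k t, t < 0 → g k t = 0)
    (hsum : ∀ x ∈ frontier Ω, ∀ t : ℝ,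
      ∑ k, g k (t - c⁻¹ * ‖x - p k‖) / (4 * π * ‖x - p k‖) = 0) :
    ∀ k t, g k t = 0 := by
  classical
  by_contra hcon
  push_neg at hcon
  obtain ⟨k₀, t₀, hk₀⟩ := hcon
  set A : Finset (Fin n) := Finset.univ.filter (fun k => ∃ t, g k t ≠ 0) with hA
  have hk₀A : k₀ ∈ A := by simp [hA]; exact ⟨t₀, hk₀⟩
  have hAnotmem : ∀ k, k ∉ A → ∀ t, g k t = 0 := by
    intro k hk t
    by_contra h
    exact hk (by simp [hA]; exact ⟨t, h⟩)
  set τ : Fin n → ℝ := fun k => sInf {t | g k t ≠ 0} with hτ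
  have hbdd : ∀ k, BddBelow {t | g k t ≠ 0} := by
    intro k
    exact ⟨0, fun t ht => not_lt.mp (fun h => ht (hg0 k t h))⟩
  have hSne : ∀ k ∈ A, {t | g k t ≠ 0}.Nonempty := by
    intro k hk
    simp only [hA, Finset.mem_filter] at hk
    exact hk.2
  have hF1 : ∀ k t, t < τ k → g k t = 0 := by
    intro k t ht
    by_contra h
    exact absurd (csInf_le (hbdd k) (by exact h)) (not_le.mpr ht)
  have hrpos : ∀ x ∈ frontier Ω, ∀ k, 0 < ‖x - p k‖ := by
    intro x hx k
    rw [norm_pos_iff, sub_ne_zero]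
    intro h
    exact frontier_disj hΩo hx (h ▸ hpΩ k)
  -- no strict minimizer
  have hU : ∀ x ∈ frontier Ω, ∀ k ∈ A,
      ¬(∀ k' ∈ A, k' ≠ k →
        τ k + c⁻¹ * ‖x - p k‖ < τ k' + c⁻¹ * ‖x - p k'‖) := by
    intro x hx k hkA hstrict
    have hδ : ∃ δ : ℝ, 0 < δ ∧ ∀ k' ∈ A, k' ≠ k →
        δ ≤ (τ k' + c⁻¹ * ‖x - p k'‖) - (τ k + c⁻¹ * ‖x - p k‖) := by
      rcases (A.erase k).eq_empty_or_nonempty with he | he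
      · exact ⟨1, one_pos, fun k' hk' hne =>
          absurd (Finset.mem_erase.mpr ⟨hne, hk'⟩) (by rw [he]; exact Finset.notMem_empty k')⟩
      · obtain ⟨b, hb, hbmin⟩ := (A.erase k).exists_min_image
          (fun k' => (τ k' + c⁻¹ * ‖x - p k'‖) - (τ k + c⁻¹ * ‖x - p k‖)) he
        obtain ⟨hbne, hbA⟩ := Finset.mem_erase.mp hb
        refine ⟨_, by linarith [hstrict b hbA hbne], fun k' hk' hne =>
          hbmin k' (Finset.mem_erase.mpr ⟨hne, hk'⟩)⟩
    obtain ⟨δ, hδpos, hδle⟩ := hδ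
    have hzero : ∀ s : ℝ, s < δ → g k (τ k + s) = 0 := by
      intro s hs
      have hx' := hsum x hx (τ k + s + c⁻¹ * ‖x - p k‖)
      rw [Finset.sum_eq_single_of_mem k (Finset.mem_univ k)] at hx'
      · have hden : 4 * π * ‖x - p k‖ ≠ 0 := by
          have := hrpos x hx k
          have := Real.pi_pos
          positivity
        have harg : τ k + s + c⁻¹ * ‖x - p k‖ - c⁻¹ * ‖x - p k‖ = τ k + s := by ring
        rw [harg] at hx'
        exact (div_eq_zero_iff.mp hx').resolve_right hden
      · intro b _ hbne
        by_cases hbA : b ∈ A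
        · have hlt : τ k + s + c⁻¹ * ‖x - p k‖ - c⁻¹ * ‖x - p b‖ < τ b := by
            have := hδle b hbA hbne
            linarith
          rw [hF1 b _ hlt, zero_div]
        · rw [hAnotmem b hbA, zero_div]
    obtain ⟨t', ht'S, ht'lt⟩ := exists_lt_of_csInf_lt (hSne k hkA) (by linarith :
      sInf {t | g k t ≠ 0} < τ k + δ)
    apply ht'S
    have h2 := hzero (t' - τ k) (by linarith)
    rwa [show τ k + (t' - τ k) = t' by ring] at h2
  -- tie covering
  have hcover : ∀ x ∈ frontier Ω, ∃ j k : Fin n, j ∈ A ∧ k ∈ A ∧ j ≠ k ∧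
      ‖x - p j‖ - ‖x - p k‖ = c * (τ k - τ j) := by
    intro x hx
    obtain ⟨k, hkA, hkmin⟩ := A.exists_min_image
      (fun k' => τ k' + c⁻¹ * ‖x - p k'‖) ⟨k₀, hk₀A⟩
    have := hU x hx k hkA
    push_neg at this
    obtain ⟨k', hk'A, hk'ne, hk'le⟩ := this
    have heq : τ k + c⁻¹ * ‖x - p k‖ = τ k' + c⁻¹ * ‖x - p k'‖ :=
      le_antisymm (hkmin k' hk'A) hk'le
    refine ⟨k, k', hkA, hk'A, fun h => hk'ne (h.symm), ?_⟩
    have hcne : c ≠ 0 := ne_of_gt hc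
    field_simp at heq ⊢
    linarith [heq]
  -- Baire category on the frontier
  have hfne : (frontier Ω).Nonempty := by
    obtain ⟨R, hR⟩ := hΩb.subset_closedBall (0 : E)
    set y : E := EuclideanSpace.single (0 : Fin 3) (|R| + 1) with hy
    have hyn : ¬ y ∈ closure Ω := by
      intro hmem
      have h1 : y ∈ Metric.closedBall (0:E) R :=
        closure_minimal hR Metric.isClosed_closedBall hmem
      rw [Metric.mem_closedBall, dist_zero_right, hy, EuclideanSpace.norm_single,
        Real.norm_eq_abs, abs_of_pos (by positivity : (0:ℝ) < |R| + 1)] at h1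
      linarith [le_abs_self R]
    obtain ⟨w, _, hw2⟩ := cross_frontier hΩo (convex_segment (p k₀) y).isPreconnected
      ⟨p k₀, left_mem_segment _ _ _, hpΩ k₀⟩ ⟨y, right_mem_segment _ _ _, hyn⟩
    exact ⟨w, hw2⟩
  haveI hXne : Nonempty {x // x ∈ frontier Ω} := ⟨⟨hfne.choose, hfne.choose_spec⟩⟩
  haveI : CompleteSpace {x // x ∈ frontier Ω} := isClosed_frontier.completeSpace_coe
  set f : Fin n × Fin n → Set {x // x ∈ frontier Ω} := fun jk =>
    if jk.1 ∈ A ∧ jk.2 ∈ A ∧ jk.1 ≠ jk.2 then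
      {y | ‖(y : E) - p jk.1‖ - ‖(y : E) - p jk.2‖ = c * (τ jk.2 - τ jk.1)} else ∅ with hf
  have hfeq : ∀ jk : Fin n × Fin n, f jk = if jk.1 ∈ A ∧ jk.2 ∈ A ∧ jk.1 ≠ jk.2 then
      {y : {x // x ∈ frontier Ω} |
        ‖(y : E) - p jk.1‖ - ‖(y : E) - p jk.2‖ = c * (τ jk.2 - τ jk.1)} else ∅ :=
    fun jk => rfl
  have hfclosed : ∀ jk, IsClosed (f jk) := by
    intro jk
    rw [hfeq]
    split
    · apply isClosed_eq
      · exact ((continuous_subtype_val.sub continuous_const).norm.sub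
          (continuous_subtype_val.sub continuous_const).norm)
      · exact continuous_const
    · exact isClosed_empty
  have hfunion : ⋃ jk, f jk = univ := by
    rw [eq_univ_iff_forall]
    intro y
    obtain ⟨j, k, hjA, hkA, hjk, hψ⟩ := hcover (y : E) y.2
    refine mem_iUnion.mpr ⟨(j, k), ?_⟩
    rw [hfeq, if_pos ⟨hjA, hkA, hjk⟩]
    exact hψ
  obtain ⟨jk, hint⟩ := nonempty_interior_of_iUnion_of_closed hfclosed hfunion
  obtain ⟨x₀, hx₀int⟩ := hint
  have hx₀mem : x₀ ∈ f jk := interior_subset hx₀int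
  have hadm : jk.1 ∈ A ∧ jk.2 ∈ A ∧ jk.1 ≠ jk.2 := by
    by_contra hadm
    rw [hfeq, if_neg hadm] at hx₀mem
    exact absurd hx₀mem (notMem_empty _)
  obtain ⟨ε, hε, hball⟩ := Metric.mem_nhds_iff.mp (mem_interior_iff_mem_nhds.mp hx₀int)
  have hpatch : ∀ y ∈ frontier Ω, dist y (x₀ : E) < ε →
      dist y (p jk.1) - dist y (p jk.2) = c * (τ jk.2 - τ jk.1) := by
    intro y hy hd
    have : (⟨y, hy⟩ : {x // x ∈ frontier Ω}) ∈ f jk := by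
      apply hball
      rw [Metric.mem_ball, Subtype.dist_eq]
      exact hd
    rw [hfeq, if_pos hadm] at this
    rw [Set.mem_setOf_eq] at this
    rw [dist_eq_norm, dist_eq_norm]
    exact this
  exact no_patch_tie hΩo hΩc (hpΩ jk.1) (hpΩ jk.2) (fun h => hadm.2.2 (hpi h)) x₀.2 hε hpatch


lemma fiber_sum {M n : ℕ} (s : Fin M → E) (p : Fin n → E)
    (m : Fin M → Fin n) (hm : ∀ j, p (m j) = s j) (a : Fin M → ℝ) (F : E → ℝ) :
    ∑ k, (∑ j ∈ Finset.univ.filter (fun j => m j = k), a j) * F (p k)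
      = ∑ j, a j * F (s j) := by
  have h1 : ∀ k, (∑ j ∈ Finset.univ.filter (fun j => m j = k), a j) * F (p k)
      = ∑ j ∈ Finset.univ.filter (fun j => m j = k), a j * F (s j) := by
    intro k
    rw [Finset.sum_mul]
    apply Finset.sum_congr rfl
    intro j hj
    rw [Finset.mem_filter] at hj
    rw [← hj.2, hm j]
  rw [Finset.sum_congr rfl (fun k _ => h1 k)]
  exact Finset.sum_fiberwise_of_maps_to (fun j _ => Finset.mem_univ (m j)) _

/-- Theorem 2.2: uniqueness for the stationary inverse point-source problem. -/
theorem stmt_8 (Ω : Set (EuclideanSpace ℝ (Fin 3)))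
    (hΩo : IsOpen Ω) (hΩc : Convex ℝ Ω) (hΩb : Bornology.IsBounded Ω)
    (c : ℝ) (hc : 0 < c) (M₁ M₂ : ℕ) (hM₁ : 0 < M₁) (hM₂ : 0 < M₂)
    (s₁ : Fin M₁ → EuclideanSpace ℝ (Fin 3)) (s₂ : Fin M₂ → EuclideanSpace ℝ (Fin 3))
    (hs₁Ω : ∀ j, s₁ j ∈ Ω) (hs₂Ω : ∀ j, s₂ j ∈ Ω)
    (hs₁i : Function.Injective s₁) (hs₂i : Function.Injective s₂)
    (a₁ : Fin M₁ → ℝ) (a₂ : Fin M₂ → ℝ) (ha₁ : ∀ j, 0 < a₁ j) (ha₂ : ∀ j, 0 < a₂ j)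
    (lam₁ lam₂ : ℝ → ℝ) (hl₁ : Continuous lam₁) (hl₂ : Continuous lam₂)
    (hcaus₁ : ∀ t < 0, lam₁ t = 0) (hcaus₂ : ∀ t < 0, lam₂ t = 0)
    (hnt₁ : ∃ t, lam₁ t ≠ 0) (hnt₂ : ∃ t, lam₂ t ≠ 0)
    (hdata : ∀ x ∈ frontier Ω, ∀ t : ℝ,
      ∑ j : Fin M₁, a₁ j * lam₁ (t - c⁻¹ * ‖x - s₁ j‖) / (4 * π * ‖x - s₁ j‖) =
      ∑ j : Fin M₂, a₂ j * lam₂ (t - c⁻¹ * ‖x - s₂ j‖) / (4 * π * ‖x - s₂ j‖)) :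
    M₁ = M₂ ∧ ∃ σ : Fin M₁ ≃ Fin M₂, ∀ j : Fin M₁,
      s₁ j = s₂ (σ j) ∧ ∀ t : ℝ, a₁ j * lam₁ t = a₂ (σ j) * lam₂ t := by
  classical
  set P : Finset (EuclideanSpace ℝ (Fin 3)) :=
    (Finset.univ.image s₁) ∪ (Finset.univ.image s₂) with hP
  set n := P.card with hn
  set e : {x // x ∈ P} ≃ Fin n := P.equivFin with he
  set p : Fin n → EuclideanSpace ℝ (Fin 3) := fun k => ((e.symm k : {x // x ∈ P}) : _) with hp
  have hpi : Function.Injective p := fun a b h => e.symm.injective (Subtype.ext h)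
  have hpΩ : ∀ k, p k ∈ Ω := by
    intro k
    have hk : (p k) ∈ P := (e.symm k).2
    rw [hP, Finset.mem_union] at hk
    rcases hk with h | h
    · obtain ⟨j, _, hj⟩ := Finset.mem_image.mp h; exact hj ▸ hs₁Ω j
    · obtain ⟨j, _, hj⟩ := Finset.mem_image.mp h; exact hj ▸ hs₂Ω j
  have hm₁mem : ∀ j, s₁ j ∈ P := fun j =>
    Finset.mem_union_left _ (Finset.mem_image_of_mem _ (Finset.mem_univ j))
  have hm₂mem : ∀ j, s₂ j ∈ P := fun j =>
    Finset.mem_union_right _ (Finset.mem_image_of_mem _ (Finset.mem_univ j))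
  set m₁ : Fin M₁ → Fin n := fun j => e ⟨s₁ j, hm₁mem j⟩ with hm₁
  set m₂ : Fin M₂ → Fin n := fun j => e ⟨s₂ j, hm₂mem j⟩ with hm₂
  have hpm₁ : ∀ j, p (m₁ j) = s₁ j := by
    intro j; rw [hp, hm₁]; simp
  have hpm₂ : ∀ j, p (m₂ j) = s₂ j := by
    intro j; rw [hp, hm₂]; simp
  set α : Fin n → ℝ := fun k => ∑ j ∈ Finset.univ.filter (fun j => m₁ j = k), a₁ j with hα
  set β : Fin n → ℝ := fun k => ∑ j ∈ Finset.univ.filter (fun j => m₂ j = k), a₂ j with hβ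
  set g : Fin n → ℝ → ℝ := fun k t => α k * lam₁ t - β k * lam₂ t with hg
  have hg0 : ∀ k t, t < 0 → g k t = 0 := by
    intro k t ht
    simp only [hg, hcaus₁ t ht, hcaus₂ t ht, mul_zero, sub_zero]
  have hsum' : ∀ x ∈ frontier Ω, ∀ t : ℝ,
      ∑ k, g k (t - c⁻¹ * ‖x - p k‖) / (4 * π * ‖x - p k‖) = 0 := by
    intro x hx t
    have h1 : ∀ k, g k (t - c⁻¹ * ‖x - p k‖) / (4 * π * ‖x - p k‖)
        = α k * (lam₁ (t - c⁻¹ * ‖x - p k‖) / (4 * π * ‖x - p k‖))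
          - β k * (lam₂ (t - c⁻¹ * ‖x - p k‖) / (4 * π * ‖x - p k‖)) := by
      intro k
      simp only [hg]
      rw [sub_div, mul_div_assoc, mul_div_assoc]
    rw [Finset.sum_congr rfl (fun k _ => h1 k), Finset.sum_sub_distrib]
    rw [fiber_sum s₁ p m₁ hpm₁ a₁ (fun y => lam₁ (t - c⁻¹ * ‖x - y‖) / (4 * π * ‖x - y‖))]
    rw [fiber_sum s₂ p m₂ hpm₂ a₂ (fun y => lam₂ (t - c⁻¹ * ‖x - y‖) / (4 * π * ‖x - y‖))]
    rw [sub_eq_zero]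
    have hd := hdata x hx t
    simp only [mul_div_assoc] at hd
    exact hd
  have hgzero := core hΩo hΩc hΩb hc p hpi hpΩ g hg0 hsum'
  have hαβ : ∀ k t, α k * lam₁ t = β k * lam₂ t := by
    intro k t
    have h2 := hgzero k t
    simp only [hg] at h2
    linarith [h2]
  obtain ⟨t₁, ht₁⟩ := hnt₁
  obtain ⟨t₂, ht₂⟩ := hnt₂
  have hm₁i : Function.Injective m₁ := by
    intro i j h
    apply hs₁i
    have := congrArg p h
    rwa [hpm₁, hpm₁] at this
  have hm₂i : Function.Injective m₂ := by
    intro i j h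
    apply hs₂i
    have := congrArg p h
    rwa [hpm₂, hpm₂] at this
  have hA1 : ∀ j, α (m₁ j) = a₁ j := by
    intro j
    simp only [hα]
    have hfl : Finset.univ.filter (fun i => m₁ i = m₁ j) = {j} := by
      ext i
      simp only [Finset.mem_filter, Finset.mem_univ, true_and, Finset.mem_singleton]
      exact ⟨fun h => hm₁i h, fun h => h ▸ rfl⟩
    rw [hfl, Finset.sum_singleton]
  have hB2 : ∀ i, β (m₂ i) = a₂ i := by
    intro i
    simp only [hβ]
    have hfl : Finset.univ.filter (fun j => m₂ j = m₂ i) = {i} := by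
      ext j
      simp only [Finset.mem_filter, Finset.mem_univ, true_and, Finset.mem_singleton]
      exact ⟨fun h => hm₂i h, fun h => h ▸ rfl⟩
    rw [hfl, Finset.sum_singleton]
  have hσex : ∀ j : Fin M₁, ∃ i : Fin M₂, s₂ i = s₁ j := by
    intro j
    by_contra hne
    push_neg at hne
    have hβ0 : β (m₁ j) = 0 := by
      simp only [hβ]
      apply Finset.sum_eq_zero
      intro i hi
      rw [Finset.mem_filter] at hi
      exfalso
      apply hne i
      have := congrArg p hi.2
      rwa [hpm₂, hpm₁] at this
    have := hαβ (m₁ j) t₁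
    rw [hA1 j, hβ0, zero_mul] at this
    exact (mul_ne_zero (ne_of_gt (ha₁ j)) ht₁) this
  have hτex : ∀ i : Fin M₂, ∃ j : Fin M₁, s₁ j = s₂ i := by
    intro i
    by_contra hne
    push_neg at hne
    have hα0 : α (m₂ i) = 0 := by
      simp only [hα]
      apply Finset.sum_eq_zero
      intro j hj
      rw [Finset.mem_filter] at hj
      exfalso
      apply hne j
      have := congrArg p hj.2
      rwa [hpm₁, hpm₂] at this
    have := hαβ (m₂ i) t₂
    rw [hB2 i, hα0, zero_mul] at this
    exact (mul_ne_zero (ne_of_gt (ha₂ i)) ht₂) this.symm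
  choose σf hσf using hσex
  choose τf hτf using hτex
  have hleft : Function.LeftInverse τf σf := by
    intro j
    apply hs₁i
    rw [hτf (σf j), hσf j]
  have hright : Function.RightInverse τf σf := by
    intro i
    apply hs₂i
    rw [hσf (τf i), hτf i]
  set σ : Fin M₁ ≃ Fin M₂ := ⟨σf, τf, hleft, hright⟩ with hσ
  have hMeq : M₁ = M₂ := by
    have := Fintype.card_congr σ
    simpa using this
  refine ⟨hMeq, σ, fun j => ⟨(hσf j).symm, fun t => ?_⟩⟩
  have h1 := hαβ (m₁ j) t
  rw [hA1 j] at h1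
  have hβval : β (m₁ j) = a₂ (σ j) := by
    simp only [hβ]
    have hmm : m₂ (σ j) = m₁ j := by
      have hs : s₂ (σ j) = s₁ j := hσf j
      simp only [hm₁, hm₂]
      exact congrArg e (Subtype.ext hs)
    have hfl : Finset.univ.filter (fun i => m₂ i = m₁ j) = {σ j} := by
      ext i
      simp only [Finset.mem_filter, Finset.mem_univ, true_and, Finset.mem_singleton]
      constructor
      · intro h
        apply hm₂i
        rw [h, hmm]
      · intro h
        rw [h, hmm]
    rw [hfl, Finset.sum_singleton]
  rw [hβval] at h1
  exact h1
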